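/- For any binary word X, N_0(X) · N_{10}(X) = N_{010}(X) + 2·N_{100}(X) + N_{10}(X). -/
import Mathlib


def patCount (w X : List Bool) : ℕ := X.sublists.count w

lemma patCount_cons (a : Bool) (w X : List Bool) :
    patCount w (a :: X) = patCount w X + (X.sublists.map (a :: ·)).count w := by
  unfold patCount
  simp only [List.count]
  rw [(List.sublists_cons_perm_append a X).countP_eq, List.countP_append]

lemma count_map_cons_same (a : Bool) (w : List Bool) (s : List (List Bool)) :
    (s.map (a :: ·)).count (a :: w) = s.count w := by
  induction s with
  | nil => simp
  | cons x s ih => simp [List.count_cons, ih]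

lemma count_map_cons_ne (a b : Bool) (hab : b ≠ a) (w : List Bool) (s : List (List Bool)) :
    (s.map (b :: ·)).count (a :: w) = 0 := by
  induction s with
  | nil => simp
  | cons x s ih => simp [List.count_cons, ih, hab]

lemma count_map_nil (b : Bool) (s : List (List Bool)) :
    (s.map (b :: ·)).count ([] : List Bool) = 0 := by
  induction s with
  | nil => simp
  | cons x s ih => simp [List.count_cons, ih]

lemma pc_nil (X : List Bool) : patCount [] X = 1 := by
  induction X with
  | nil => rfl
  | cons a X ih => rw [patCount_cons, count_map_nil, ih]

lemma pc_cons (a : Bool) (b : Bool) (w X : List Bool) :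
    patCount (b :: w) (a :: X) =
      patCount (b :: w) X + if b = a then patCount w X else 0 := by
  rw [patCount_cons]
  by_cases h : b = a
  · subst h; rw [count_map_cons_same, if_pos rfl]; rfl
  · rw [count_map_cons_ne _ _ (Ne.symm h), if_neg h]

lemma two_N00 (X : List Bool) :
    2 * patCount [false, false] X + patCount [false] X
      = patCount [false] X * patCount [false] X := by
  induction X with
  | nil => rfl
  | cons a X ih =>
    cases a <;> simp [pc_cons, pc_nil] <;> nlinarith [ih]

theorem N0_mul_N10 (X : List Bool) :
    patCount [false] X * patCount [true, false] X
      = patCount [false, true, false] X + 2 * patCount [true, false, false] X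
        + patCount [true, false] X := by
  induction X with
  | nil => rfl
  | cons a X ih =>
    have h := two_N00 X
    cases a <;> simp [pc_cons, pc_nil] <;> nlinarith [ih, h]
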